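/- Let C be a category admitting countable coproducts and let G : C ⥤ C be an endofunctor admitting a left adjoint H : C ⥤ C. Then the forgetful functor U : Frob(C, G) ⥤ C admits a left adjoint L, and there is a natural isomorphism U ∘ L ≅ (V ↦ ∐_{n∈ℕ} Hⁿ(V)), where Hⁿ denotes the n-fold iterate of H. -/

import Mathlib

/-!
STATEMENT 1: If `C` admits countable coproducts and `G : C ⥤ C` admits a left
adjoint `H`, then the forgetful functor `U : Frob (C, G) ⥤ C` (from coalgebras over
`G` to `C`) admits a left adjoint `L`, and `U ∘ L` is naturally isomorphic to
`V ↦ ∐_{n ∈ ℕ} Hⁿ V`.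
-/

open CategoryTheory CategoryTheory.Limits

universe v u

variable {C : Type u} [Category.{v} C]

/-- The `n`-fold iterate of an endofunctor. -/
def iterateFunctor (H : C ⥤ C) : ℕ → (C ⥤ C)
  | 0 => 𝟭 C
  | n + 1 => iterateFunctor H n ⋙ H

/-- The functor `V ↦ ∐_{n ∈ ℕ} Hⁿ V`. -/
noncomputable def sigmaIterate (H : C ⥤ C) [HasCountableCoproducts C] : C ⥤ C where
  obj V := ∐ fun n : ℕ => (iterateFunctor H n).obj V
  map g := Limits.Sigma.map fun n => (iterateFunctor H n).map g
  map_id V := by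
    ext n
    simp
  map_comp g₁ g₂ := by
    ext n
    simp

namespace FrobProofAux

variable {G H : C ⥤ C} [HasCountableCoproducts C] (adj : H ⊣ G)
variable [PreservesColimitsOfSize.{0, 0} H]

/-- Inclusion of the `n`-th summand. -/
noncomputable abbrev inc (V : C) (n : ℕ) :
    (iterateFunctor H n).obj V ⟶ ∐ fun m : ℕ => (iterateFunctor H m).obj V :=
  Sigma.ι (fun m : ℕ => (iterateFunctor H m).obj V) n

/-- The "shift" map `H (∐ₙ Hⁿ V) ⟶ ∐ₙ Hⁿ V`. -/
noncomputable def t (V : C) :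
    H.obj (∐ fun n : ℕ => (iterateFunctor H n).obj V) ⟶
      ∐ fun n : ℕ => (iterateFunctor H n).obj V :=
  inv (sigmaComparison H fun n : ℕ => (iterateFunctor H n).obj V) ≫
    Sigma.desc (fun n : ℕ =>
      (inc (H := H) V (n + 1) :
        H.obj ((iterateFunctor H n).obj V) ⟶ ∐ fun m : ℕ => (iterateFunctor H m).obj V))

lemma map_inc_t (V : C) (n : ℕ) :
    H.map (inc (H := H) V n) ≫ t V = inc (H := H) V (n + 1) := by
  have h0 : H.map (inc (H := H) V n) ≫
      inv (sigmaComparison H fun m : ℕ => (iterateFunctor H m).obj V) =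
      Sigma.ι (fun m : ℕ => H.obj ((iterateFunctor H m).obj V)) n := by
    rw [IsIso.comp_inv_eq, ι_comp_sigmaComparison]
  rw [t, ← Category.assoc, h0]
  simp [inc]
  rfl

lemma H_hom_ext {V : C} {X : C}
    {a b : H.obj (∐ fun n : ℕ => (iterateFunctor H n).obj V) ⟶ X}
    (w : ∀ n : ℕ, H.map (inc (H := H) V n) ≫ a = H.map (inc (H := H) V n) ≫ b) : a = b := by
  rw [← cancel_epi (sigmaComparison H fun n : ℕ => (iterateFunctor H n).obj V)]
  ext n
  simpa [ι_comp_sigmaComparison_assoc] using w n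

/-- The free coalgebra on `V`. -/
noncomputable def Lobj (V : C) : Endofunctor.Coalgebra G where
  V := ∐ fun n : ℕ => (iterateFunctor H n).obj V
  str := adj.homEquiv _ _ (t (H := H) V)

lemma hom_cond_iff {V : C} {M : Endofunctor.Coalgebra G}
    (f : (∐ fun n : ℕ => (iterateFunctor H n).obj V) ⟶ M.V) :
    ((Lobj adj V).str ≫ G.map f = f ≫ M.str) ↔
      (t (H := H) V ≫ f = H.map f ≫ (adj.homEquiv M.V M.V).symm M.str) := by
  have h1 : (Lobj adj V).str ≫ G.map f = adj.homEquiv _ _ (t (H := H) V ≫ f) := by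
    rw [Adjunction.homEquiv_naturality_right]; rfl
  have h2 : f ≫ M.str = adj.homEquiv _ _ (H.map f ≫ (adj.homEquiv M.V M.V).symm M.str) := by
    rw [Adjunction.homEquiv_naturality_left, Equiv.apply_symm_apply]
  rw [h1, h2]
  exact (adj.homEquiv _ _).apply_eq_iff_eq

/-- The family of maps `Hⁿ V ⟶ M.V` generated by `g : V ⟶ M.V`. -/
noncomputable def fam (M : Endofunctor.Coalgebra G) {V : C} (g : V ⟶ M.V) :
    ∀ n : ℕ, (iterateFunctor H n).obj V ⟶ M.V
  | 0 => g
  | n + 1 => H.map (fam M g n) ≫ (adj.homEquiv M.V M.V).symm M.str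

lemma fam_eq {V : C} {M : Endofunctor.Coalgebra G} (f : Lobj adj V ⟶ M) (n : ℕ) :
    inc (H := H) V n ≫ f.f = fam adj M (inc (H := H) V 0 ≫ f.f) n := by
  induction n with
  | zero => rfl
  | succ n ih =>
    have key : t (H := H) V ≫ f.f = H.map f.f ≫ (adj.homEquiv M.V M.V).symm M.str :=
      (hom_cond_iff adj f.f).mp f.h
    have := congrArg (fun q => H.map (inc (H := H) V n) ≫ q) key
    exact ((congrArg (· ≫ f.f) (map_inc_t (H := H) V n)).symm.trans (Category.assoc _ _ _)).trans
      ((congrArg (H.map (inc (H := H) V n) ≫ ·) key).trans (((Category.assoc _ _ _).symm.trans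
        (congrArg (· ≫ (adj.homEquiv M.V M.V).symm M.str) (H.map_comp _ _).symm)).trans
        (congrArg (fun q => H.map q ≫ (adj.homEquiv M.V M.V).symm M.str) ih)))

lemma fam_natural {V V' : C} {M : Endofunctor.Coalgebra G} (h : V' ⟶ V) (g : V ⟶ M.V) (n : ℕ) :
    fam adj M (h ≫ g) n = (iterateFunctor H n).map h ≫ fam adj M g n := by
  induction n with
  | zero => rfl
  | succ n ih =>
    show H.map (fam adj M (h ≫ g) n) ≫ _ =
      H.map ((iterateFunctor H n).map h) ≫ H.map (fam adj M g n) ≫ _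
    rw [ih, H.map_comp, Category.assoc]

/-- The coalgebra map out of the free coalgebra induced by `g`. -/
noncomputable def descHom {V : C} (M : Endofunctor.Coalgebra G) (g : V ⟶ M.V) :
    Lobj adj V ⟶ M where
  f := Sigma.desc (fam adj M g)
  h := by
    refine (hom_cond_iff adj (M := M) _).mpr ?_
    apply H_hom_ext
    intro n
    rw [← Category.assoc, map_inc_t, ← Category.assoc, ← H.map_comp]
    simp only [inc, colimit.ι_desc]
    exact (Sigma.ι_desc (fam adj M g) (n + 1)).trans rfl

/-- The free functor `L`. -/
noncomputable def L : C ⥤ Endofunctor.Coalgebra G where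
  obj := Lobj adj
  map {V V'} h :=
    { f := Limits.Sigma.map fun n : ℕ => (iterateFunctor H n).map h
      h := by
        refine (hom_cond_iff adj (M := Lobj adj V') _).mpr ?_
        have hκ : (adj.homEquiv _ _).symm (Lobj adj V').str = t (H := H) V' :=
          (adj.homEquiv _ _).symm_apply_apply _
        rw [hκ]
        apply H_hom_ext
        intro n
        erw [← Category.assoc, map_inc_t, ← Category.assoc, ← H.map_comp]
        have h1 : inc (H := H) V n ≫ Limits.Sigma.map (fun m : ℕ => (iterateFunctor H m).map h) =
            (iterateFunctor H n).map h ≫ inc (H := H) V' n := by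
          simp [inc]
        have h2 : inc (H := H) V (n + 1) ≫
              Limits.Sigma.map (fun m : ℕ => (iterateFunctor H m).map h) =
            (iterateFunctor H (n + 1)).map h ≫ inc (H := H) V' (n + 1) := by
          simp [inc]
        erw [h1, h2, H.map_comp, Category.assoc, map_inc_t]
        rfl }
  map_id V := by
    apply Endofunctor.Coalgebra.ext
    apply colimit.hom_ext
    rintro ⟨n⟩
    simp
    rfl
  map_comp g₁ g₂ := by
    apply Endofunctor.Coalgebra.ext
    apply colimit.hom_ext
    rintro ⟨n⟩
    simp
    exact congrArg _ (Sigma.map_comp_map _ _).symm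

/-- The hom-set equivalence. -/
noncomputable def mainHomEquiv (V : C) (M : Endofunctor.Coalgebra G) :
    ((L adj).obj V ⟶ M) ≃ (V ⟶ M.V) where
  toFun f := inc (H := H) V 0 ≫ f.f
  invFun g := descHom adj M g
  left_inv f := by
    apply Endofunctor.Coalgebra.ext
    apply colimit.hom_ext
    rintro ⟨n⟩
    show inc (H := H) V n ≫ Sigma.desc (fam adj M _) = inc (H := H) V n ≫ f.f
    rw [fam_eq adj f n]
    simp [inc]
    rfl
  right_inv g := by
    show inc (H := H) V 0 ≫ Sigma.desc (fam adj M g) = g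
    simp [inc]
    rfl

/-- The adjunction `L ⊣ forget`. -/
noncomputable def theAdj : L adj ⊣ Endofunctor.Coalgebra.forget G :=
  Adjunction.mkOfHomEquiv
    { homEquiv := fun V M => mainHomEquiv adj V M
      homEquiv_naturality_left_symm := by
        intro V' V M h g
        apply Endofunctor.Coalgebra.ext
        apply colimit.hom_ext
        rintro ⟨n⟩
        show inc (H := H) V' n ≫ Sigma.desc (fam adj M (h ≫ g)) =
          inc (H := H) V' n ≫ (Limits.Sigma.map fun m : ℕ => (iterateFunctor H m).map h) ≫
            Sigma.desc (fam adj M g)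
        have l1 : inc (H := H) V' n ≫ Limits.Sigma.desc (fam adj M (h ≫ g)) =
            fam adj M (h ≫ g) n := by simp [inc]
        have l2 : inc (H := H) V' n ≫
              (Limits.Sigma.map fun m : ℕ => (iterateFunctor H m).map h) ≫
              Limits.Sigma.desc (fam adj M g) =
            (iterateFunctor H n).map h ≫ fam adj M g n := by simp [inc]
        rw [l1, l2]
        exact fam_natural adj h g n
      homEquiv_naturality_right := by
        intro V M M' f m
        show inc (H := H) V 0 ≫ (f ≫ m).f = (inc (H := H) V 0 ≫ f.f) ≫ m.f
        simp
        exact (Category.assoc _ _ _).symm }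

/-- The composite `L ⋙ forget` is `sigmaIterate H`. -/
noncomputable def theIso : L adj ⋙ Endofunctor.Coalgebra.forget G ≅ sigmaIterate H :=
  NatIso.ofComponents (fun V => Iso.refl _) (by
    intro V V' h
    exact (Category.comp_id _).trans (Category.id_comp _).symm)

end FrobProofAux

theorem coalgebra_forget_hasLeftAdjoint (G H : C ⥤ C) [HasCountableCoproducts C]
    (adj : H ⊣ G) :
    ∃ L : C ⥤ Endofunctor.Coalgebra G,
      Nonempty (L ⊣ Endofunctor.Coalgebra.forget G) ∧
      Nonempty (L ⋙ Endofunctor.Coalgebra.forget G ≅ sigmaIterate H) := by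
  haveI : PreservesColimitsOfSize.{0, 0} H := adj.leftAdjoint_preservesColimits
  exact ⟨FrobProofAux.L adj, ⟨FrobProofAux.theAdj adj⟩, ⟨FrobProofAux.theIso adj⟩⟩
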